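/- Fix positive reals X_m ≤ X_n ≤ 2X_m and k > 0 with k X_m^{4/3} ≤ X_n² − X_m². Define g(x) = √(X_n² − x²) − √(X_m² − x²) − 2kx on [0, X_m). Then g''(x) ≥ g''(0) = (X_n² − X_m²)/(X_m X_n (X_m + X_n)) ≥ (k/6) X_m^{−5/3} for all x ∈ [0, X_m). -/

import Mathlib

open Real

private lemma sqrtDeriv (a x : ℝ) (h : x^2 < a^2) :
    HasDerivAt (fun y => Real.sqrt (a^2 - y^2)) (-x / Real.sqrt (a^2 - x^2)) x := by
  have hpos : 0 < a^2 - x^2 := sub_pos.mpr h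
  have h1 : HasDerivAt (fun y : ℝ => a^2 - y^2) (-(2*x)) x := by
    simpa using (hasDerivAt_pow 2 x).const_sub (a^2)
  have h2 := (Real.hasDerivAt_sqrt (ne_of_gt hpos)).comp x h1
  have hs : 0 < Real.sqrt (a^2 - x^2) := Real.sqrt_pos.mpr hpos
  refine h2.congr_deriv ?_
  field_simp

private lemma termDeriv (a x : ℝ) (h : x^2 < a^2) :
    HasDerivAt (fun y => y / Real.sqrt (a^2 - y^2)) (a^2 / (Real.sqrt (a^2 - x^2))^3) x := by
  have hpos : 0 < a^2 - x^2 := sub_pos.mpr h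
  have hs : 0 < Real.sqrt (a^2 - x^2) := Real.sqrt_pos.mpr hpos
  have hd := (hasDerivAt_id x).div (sqrtDeriv a x h) (ne_of_gt hs)
  refine hd.congr_deriv ?_
  have hsq : Real.sqrt (a^2 - x^2) ^ 2 = a^2 - x^2 := Real.sq_sqrt hpos.le
  simp only [id_eq]
  field_simp
  linear_combination hsq

private lemma main_ineq (Xm Xn x : ℝ) (hXm : 0 < Xm) (h1 : Xm ≤ Xn)
    (hx0 : 0 ≤ x) (hx : x < Xm) :
    1/Xm - 1/Xn ≤ Xm^2/(Real.sqrt (Xm^2 - x^2))^3 - Xn^2/(Real.sqrt (Xn^2 - x^2))^3 := by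
  have hXn : 0 < Xn := lt_of_lt_of_le hXm h1
  have hm : 0 < Xm^2 - x^2 := by nlinarith
  have hn : 0 < Xn^2 - x^2 := by nlinarith
  set sm := Real.sqrt (Xm^2 - x^2) with hsmdef
  set sn := Real.sqrt (Xn^2 - x^2) with hsndef
  have hsm : 0 < sm := Real.sqrt_pos.mpr hm
  have hsn : 0 < sn := Real.sqrt_pos.mpr hn
  have hsm2 : sm^2 = Xm^2 - x^2 := Real.sq_sqrt hm.le
  have hsn2 : sn^2 = Xn^2 - x^2 := Real.sq_sqrt hn.le
  have hsnXn : sn ≤ Xn := by nlinarith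
  have hq1 : 1 ≤ Xn / sn := (one_le_div hsn).mpr hsnXn
  have hpq : Xn / sn ≤ Xm / sm := by
    rw [div_le_div_iff₀ hsn hsm]
    have hsum : 0 < Xm * sn + Xn * sm := by positivity
    have hsq2 : (Xn * sm)^2 ≤ (Xm * sn)^2 := by
      rw [mul_pow, mul_pow, hsm2, hsn2]
      nlinarith [mul_nonneg (sq_nonneg x) (show (0:ℝ) ≤ Xn^2 - Xm^2 by nlinarith)]
    nlinarith [hsq2, hsum]
  have h3 : (Xn/sn)^3 ≤ (Xm/sm)^3 := pow_le_pow_left₀ (by positivity) hpq 3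
  have hp1 : (1:ℝ) ≤ Xm / sm := le_trans hq1 hpq
  have hp3 : (1:ℝ) ≤ (Xm/sm)^3 := by
    calc (1:ℝ) = 1^3 := by norm_num
    _ ≤ (Xm/sm)^3 := pow_le_pow_left₀ (by norm_num) hp1 3
  have hkey : ((Xn/sn)^3 - 1)/Xn ≤ ((Xm/sm)^3 - 1)/Xm := by
    apply div_le_div₀ (by linarith) (by linarith) hXm h1
  have e1 : Xm^2/sm^3 - 1/Xm = ((Xm/sm)^3 - 1)/Xm := by field_simp
  have e2 : Xn^2/sn^3 - 1/Xn = ((Xn/sn)^3 - 1)/Xn := by field_simp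
  linarith [e1, e2, hkey]

/-- For `X_m ≤ X_n ≤ 2X_m`, `k > 0` and `kX_m^{4/3} ≤ X_n² − X_m²`, the function
`g(x) = √(X_n² − x²) − √(X_m² − x²) − 2kx` satisfies
`g''(x) ≥ g''(0) = (X_n²−X_m²)/(X_m X_n(X_m+X_n)) ≥ (k/6)X_m^{−5/3}` on `[0, X_m)`. -/
theorem phase_second_derivative_bound_comparable (Xm Xn k : ℝ)
    (hXm : 0 < Xm) (h1 : Xm ≤ Xn) (h2 : Xn ≤ 2 * Xm) (hk : 0 < k)
    (hgap : k * Xm ^ ((4:ℝ)/3) ≤ Xn^2 - Xm^2) :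
    let g : ℝ → ℝ := fun x => Real.sqrt (Xn^2 - x^2) - Real.sqrt (Xm^2 - x^2) - 2 * k * x
    deriv (deriv g) 0 = (Xn^2 - Xm^2) / (Xm * Xn * (Xm + Xn)) ∧
    (k/6) * Xm ^ (-(5:ℝ)/3) ≤ deriv (deriv g) 0 ∧
    ∀ x ∈ Set.Ico (0:ℝ) Xm, deriv (deriv g) 0 ≤ deriv (deriv g) x := by
  intro g
  have hXn : 0 < Xn := lt_of_lt_of_le hXm h1
  have hsq : Xm^2 ≤ Xn^2 := by nlinarith
  -- first derivative
  have hd1 : ∀ y : ℝ, y^2 < Xm^2 →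
      HasDerivAt g (y / Real.sqrt (Xm^2 - y^2) - y / Real.sqrt (Xn^2 - y^2) - 2*k) y := by
    intro y hy
    have hyn : y^2 < Xn^2 := lt_of_lt_of_le hy hsq
    have hd := ((sqrtDeriv Xn y hyn).sub (sqrtDeriv Xm y hy)).sub
      ((hasDerivAt_id y).const_mul (2*k))
    refine hd.congr_deriv ?_
    ring
  -- second derivative
  have key : ∀ x : ℝ, x^2 < Xm^2 →
      deriv (deriv g) x = Xm^2 / (Real.sqrt (Xm^2 - x^2))^3 - Xn^2 / (Real.sqrt (Xn^2 - x^2))^3 := by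
    intro x hx
    have hxn : x^2 < Xn^2 := lt_of_lt_of_le hx hsq
    have hopen : IsOpen {y : ℝ | y^2 < Xm^2} :=
      isOpen_lt (by continuity) continuous_const
    have hmem : {y : ℝ | y^2 < Xm^2} ∈ nhds x := hopen.mem_nhds hx
    have heq : deriv g =ᶠ[nhds x]
        (fun y => y / Real.sqrt (Xm^2 - y^2) - y / Real.sqrt (Xn^2 - y^2) - 2*k) :=
      Filter.eventually_of_mem hmem fun y hy => (hd1 y hy).deriv
    rw [Filter.EventuallyEq.deriv_eq heq]
    have hd2 : HasDerivAt
        (fun y => y / Real.sqrt (Xm^2 - y^2) - y / Real.sqrt (Xn^2 - y^2) - 2*k)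
        (Xm^2 / (Real.sqrt (Xm^2 - x^2))^3 - Xn^2 / (Real.sqrt (Xn^2 - x^2))^3) x :=
      ((termDeriv Xm x hx).sub (termDeriv Xn x hxn)).sub_const (2*k)
    exact hd2.deriv
  have h0m : (0:ℝ)^2 < Xm^2 := by simpa using pow_pos hXm 2
  have hval0 : deriv (deriv g) 0 = 1/Xm - 1/Xn := by
    rw [key 0 h0m]
    rw [show Xm^2 - 0^2 = Xm^2 by ring, show Xn^2 - 0^2 = Xn^2 by ring,
      Real.sqrt_sq hXm.le, Real.sqrt_sq hXn.le]
    field_simp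
  refine ⟨?_, ?_, ?_⟩
  · rw [hval0]; field_simp; ring
  · rw [hval0]
    have hrw : (1:ℝ)/Xm - 1/Xn = (Xn^2 - Xm^2) / (Xm * Xn * (Xm + Xn)) := by
      field_simp; ring
    rw [hrw]
    have hpow : Xm ^ (-(5:ℝ)/3) = Xm ^ ((4:ℝ)/3) / Xm ^ (3:ℕ) := by
      rw [← Real.rpow_natCast Xm 3, ← Real.rpow_sub hXm]
      norm_num
    rw [hpow]
    have hlhs : k/6 * (Xm ^ ((4:ℝ)/3) / Xm ^ (3:ℕ)) = (k * Xm ^ ((4:ℝ)/3)) / (6 * Xm ^ (3:ℕ)) := by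
      ring
    rw [hlhs]
    have ha : Xn * Xm ≤ 2*Xm^2 := by nlinarith
    have hb : Xn^2 ≤ 4*Xm^2 := by nlinarith
    have hden : Xm * Xn * (Xm + Xn) ≤ 6 * Xm^3 := by
      nlinarith [mul_le_mul_of_nonneg_left ha hXm.le, mul_le_mul_of_nonneg_left hb hXm.le]
    have hnum : 0 ≤ Xn^2 - Xm^2 := le_trans (by positivity) hgap
    exact div_le_div₀ hnum hgap (by positivity) hden
  · intro x hx
    rw [hval0, key x (by nlinarith [hx.1, hx.2])]
    exact main_ineq Xm Xn x hXm h1 hx.1 hx.2
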